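/- Let A, B ∈ 𝔹_m(ℝ) (real 2m×2m block lower triangular matrices with blocks of the form [[α,β],[−β,α]] and constant diagonal block) with AB = BA and e^A = e^B. Then A = B + 2kπ J_m for some integer k, where J_m = diag(J_2,…,J_2) with J_2 = [[0,−1],[1,0]]. -/

import Mathlib

open NormedSpace

/-- Membership in `𝕊`: a real 2×2 matrix of the form `[[α, β], [-β, α]]`. -/
def MemS (b : Matrix (Fin 2) (Fin 2) ℝ) : Prop :=
  b 0 0 = b 1 1 ∧ b 1 0 = -(b 0 1)

/-- The `(i,j)` 2×2 block of a `2m × 2m` real matrix indexed by `Fin m × Fin 2`. -/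
def blk {m : ℕ} (B : Matrix (Fin m × Fin 2) (Fin m × Fin 2) ℝ) (i j : Fin m) :
    Matrix (Fin 2) (Fin 2) ℝ :=
  Matrix.of fun a b => B (i, a) (j, b)

/-- Membership in `𝔹_m(ℝ)`: block lower triangular with 2×2 blocks in `𝕊` and all diagonal
blocks equal. -/
def MemB {m : ℕ} (B : Matrix (Fin m × Fin 2) (Fin m × Fin 2) ℝ) : Prop :=
  (∀ i j : Fin m, MemS (blk B i j)) ∧
  (∀ i j : Fin m, i < j → blk B i j = 0) ∧
  (∀ i j : Fin m, blk B i i = blk B j j)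

/-- `J_m = diag(J_2, …, J_2)` where `J_2 = [[0, -1], [1, 0]]`. -/
def Jmat (m : ℕ) : Matrix (Fin m × Fin 2) (Fin m × Fin 2) ℝ :=
  Matrix.of fun p q =>
    if p.1 = q.1 ∧ p.2 = 0 ∧ q.2 = 1 then (-1 : ℝ)
    else if p.1 = q.1 ∧ p.2 = 1 ∧ q.2 = 0 then 1 else 0

namespace Prop36

/-! ### The realification of a complex number as a 2×2 matrix -/

/-- `z = α + βi` as the 2×2 real matrix `[[α, β], [-β, α]]`. -/
def c2m (z : ℂ) : Matrix (Fin 2) (Fin 2) ℝ :=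
  Matrix.of fun a b => if a = b then z.re else if a = 0 then z.im else -z.im

lemma c2m_mul (z w : ℂ) : c2m (z * w) = c2m z * c2m w := by
  ext a b
  fin_cases a <;> fin_cases b <;>
    simp [c2m, Matrix.mul_apply, Fin.sum_univ_two, Complex.mul_re, Complex.mul_im] <;> ring

lemma c2m_one : c2m 1 = 1 := by
  ext a b
  fin_cases a <;> fin_cases b <;> simp [c2m, Matrix.one_apply]

lemma c2m_zero : c2m 0 = 0 := by
  ext a b
  fin_cases a <;> fin_cases b <;> simp [c2m]

lemma c2m_add (z w : ℂ) : c2m (z + w) = c2m z + c2m w := by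
  ext a b
  fin_cases a <;> fin_cases b <;> simp [c2m] <;> ring

lemma c2m_sum {ι : Type*} (s : Finset ι) (f : ι → ℂ) (a b : Fin 2) :
    c2m (∑ i ∈ s, f i) a b = ∑ i ∈ s, c2m (f i) a b := by
  classical
  induction s using Finset.induction with
  | empty => simp [c2m_zero]
  | insert _ _ h ih => simp [Finset.sum_insert h, c2m_add, ih]

/-! ### The realification ring homomorphism on matrices -/

/-- The realification map sending an `m×m` complex matrix to a `2m×2m` real matrix. -/
def phi (m : ℕ) : Matrix (Fin m) (Fin m) ℂ →+* Matrix (Fin m × Fin 2) (Fin m × Fin 2) ℝ where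
  toFun M := Matrix.of fun p q => c2m (M p.1 q.1) p.2 q.2
  map_one' := by
    ext ⟨i, a⟩ ⟨j, b⟩
    by_cases h : i = j <;>
      simp [Matrix.one_apply, h, c2m_one, c2m_zero, Prod.ext_iff]
  map_mul' M N := by
    ext ⟨i, a⟩ ⟨j, b⟩
    simp only [Matrix.of_apply, Matrix.mul_apply, Fintype.sum_prod_type]
    rw [c2m_sum]
    refine Finset.sum_congr rfl fun k _ => ?_
    rw [c2m_mul, Matrix.mul_apply]
  map_zero' := by
    ext ⟨i, a⟩ ⟨j, b⟩
    simp [c2m_zero]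
  map_add' M N := by
    ext ⟨i, a⟩ ⟨j, b⟩
    simp [c2m_add]

lemma phi_apply {m : ℕ} (M : Matrix (Fin m) (Fin m) ℂ) (p q : Fin m × Fin 2) :
    phi m M p q = c2m (M p.1 q.1) p.2 q.2 := rfl

lemma phi_injective (m : ℕ) : Function.Injective (phi m) := by
  intro M N h
  ext i j
  have h00 := congrFun (congrFun h (i, 0)) (j, 0)
  have h01 := congrFun (congrFun h (i, 0)) (j, 1)
  simp only [phi_apply, c2m, Matrix.of_apply] at h00 h01
  norm_num at h00 h01
  exact Complex.ext h00 h01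

lemma phi_continuous (m : ℕ) : Continuous (phi m) := by
  apply continuous_pi; rintro ⟨i, a⟩; apply continuous_pi; rintro ⟨j, b⟩
  have hij : Continuous fun M : Matrix (Fin m) (Fin m) ℂ => M i j :=
    (continuous_apply j).comp (continuous_apply i)
  have hz : Continuous fun z : ℂ => c2m z a b := by
    fin_cases a <;> fin_cases b <;> simp [c2m]
    · exact Complex.continuous_re
    · exact Complex.continuous_im
    · exact Complex.continuous_im.neg
    · exact Complex.continuous_re
  exact hz.comp hij

lemma phi_exp {m : ℕ} (M : Matrix (Fin m) (Fin m) ℂ) :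
    phi m (exp M) = exp (phi m M) := by
  letI : SeminormedRing (Matrix (Fin m) (Fin m) ℂ) := Matrix.linftyOpSemiNormedRing
  letI : NormedRing (Matrix (Fin m) (Fin m) ℂ) := Matrix.linftyOpNormedRing
  letI : NormedAlgebra ℝ (Matrix (Fin m) (Fin m) ℂ) := Matrix.linftyOpNormedAlgebra
  letI : NormedAlgebra ℚ (Matrix (Fin m) (Fin m) ℂ) := Matrix.linftyOpNormedAlgebra
  letI : SeminormedRing (Matrix (Fin m × Fin 2) (Fin m × Fin 2) ℝ) :=
    Matrix.linftyOpSemiNormedRing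
  letI : NormedRing (Matrix (Fin m × Fin 2) (Fin m × Fin 2) ℝ) := Matrix.linftyOpNormedRing
  letI : NormedAlgebra ℝ (Matrix (Fin m × Fin 2) (Fin m × Fin 2) ℝ) :=
    Matrix.linftyOpNormedAlgebra
  exact map_exp (phi m) (phi_continuous m) M

/-- The complexification of a `2m×2m` real matrix with blocks in `𝕊`. -/
def psi {m : ℕ} (A : Matrix (Fin m × Fin 2) (Fin m × Fin 2) ℝ) : Matrix (Fin m) (Fin m) ℂ :=
  Matrix.of fun i j => ⟨A (i, 0) (j, 0), A (i, 0) (j, 1)⟩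

lemma phi_psi {m : ℕ} {A : Matrix (Fin m × Fin 2) (Fin m × Fin 2) ℝ}
    (hS : ∀ i j : Fin m, MemS (blk A i j)) : phi m (psi A) = A := by
  ext ⟨i, a⟩ ⟨j, b⟩
  obtain ⟨h1, h2⟩ := hS i j
  simp only [blk, Matrix.of_apply] at h1 h2
  fin_cases a <;> fin_cases b <;>
    simp_all [phi_apply, psi, c2m]

/-! ### Strictly lower triangular matrices -/

/-- Strictly lower triangular: zero on and above the diagonal. -/
def SLT {m : ℕ} (x : Matrix (Fin m) (Fin m) ℂ) : Prop :=
  ∀ i j : Fin m, i ≤ j → x i j = 0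

lemma SLT.pow_apply {m : ℕ} {x : Matrix (Fin m) (Fin m) ℂ} (hx : SLT x) (k : ℕ) :
    ∀ i j : Fin m, (i : ℕ) < (j : ℕ) + (k + 1) → (x ^ (k + 1)) i j = 0 := by
  induction k with
  | zero =>
    intro i j h
    rw [pow_one]
    exact hx i j (by omega)
  | succ k ih =>
    intro i j h
    rw [pow_succ, Matrix.mul_apply]
    refine Finset.sum_eq_zero fun c _ => ?_
    by_cases hc : (j : ℕ) < (c : ℕ)
    · have : (i : ℕ) < (c : ℕ) + (k + 1) := by omega
      rw [ih i c this, zero_mul]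
    · rw [hx c j (by omega), mul_zero]

lemma SLT.pow_card {m : ℕ} {x : Matrix (Fin m) (Fin m) ℂ} (hx : SLT x) : x ^ m = 0 := by
  ext i j
  have hm : 0 < m := i.pos
  obtain ⟨m', rfl⟩ : ∃ m', m = m' + 1 := ⟨m - 1, by omega⟩
  rw [hx.pow_apply m' i j (by omega), Matrix.zero_apply]

/-! ### `exp` of nilpotent matrices -/

lemma exp_eq_sum_of_pow_eq_zero {m n : ℕ} {x : Matrix (Fin m) (Fin m) ℂ} (hn : x ^ n = 0) :
    exp x = ∑ k ∈ Finset.range n, ((k.factorial : ℂ))⁻¹ • x ^ k := by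
  rw [exp_eq_tsum ℂ]
  refine tsum_eq_sum fun k hk => ?_
  have hkn : n ≤ k := by simpa using hk
  have : x ^ k = 0 := by
    have : x ^ k = x ^ n * x ^ (k - n) := by rw [← pow_add]; congr 1; omega
    rw [this, hn, zero_mul]
  rw [this, smul_zero]

lemma eq_zero_of_exp_eq_one {m : ℕ} {x : Matrix (Fin m) (Fin m) ℂ}
    (hx : IsNilpotent x) (h : exp x = 1) : x = 0 := by
  obtain ⟨n, hn⟩ := hx
  rcases n with _ | n
  · have h1 : (1 : Matrix (Fin m) (Fin m) ℂ) = 0 := by simpa using hn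
    calc x = x * 1 := (mul_one x).symm
      _ = 0 := by rw [h1, mul_zero]
  rcases n with _ | n
  · simpa using hn
  · rw [exp_eq_sum_of_pow_eq_zero hn, Finset.sum_range_succ'] at h
    simp only [pow_zero, Nat.factorial_zero, Nat.cast_one, inv_one, one_smul] at h
    have h0 : ∑ k ∈ Finset.range (n + 1), (((k + 1).factorial : ℂ))⁻¹ • x ^ (k + 1) = 0 := by
      have := congrArg (· - 1) h
      simpa using this
    set w : Matrix (Fin m) (Fin m) ℂ :=
      ∑ k ∈ Finset.range (n + 1), (((k + 1).factorial : ℂ))⁻¹ • x ^ k with hw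
    have hfac : x * w = 0 := by
      rw [hw, Finset.mul_sum]
      rw [← h0]
      refine Finset.sum_congr rfl fun k _ => ?_
      rw [mul_smul_comm, ← pow_succ']
    have hwz : w = (∑ k ∈ Finset.range n, (((k + 2).factorial : ℂ))⁻¹ • x ^ (k + 1)) + 1 := by
      rw [hw, Finset.sum_range_succ']
      simp
    have hz : IsNilpotent
        (∑ k ∈ Finset.range n, (((k + 2).factorial : ℂ))⁻¹ • x ^ (k + 1)) := by
      refine Commute.isNilpotent_sum (fun k _ => ?_) fun a b _ _ => ?_
      · refine IsNilpotent.smul ⟨n + 2, ?_⟩ _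
        rw [← pow_mul]
        have : x ^ ((k + 1) * (n + 2)) = x ^ (n + 2) * x ^ ((k + 1) * (n + 2) - (n + 2)) := by
          rw [← pow_add]; congr 1
          have : n + 2 ≤ (k + 1) * (n + 2) := Nat.le_mul_of_pos_left _ (by omega)
          omega
        rw [this, hn, zero_mul]
      · exact ((Commute.pow_pow_self x _ _).smul_left _).smul_right _
    have hu : IsUnit w := by
      rw [hwz]
      exact hz.isUnit_add_one
    exact (IsUnit.mul_left_eq_zero hu).mp hfac

/-! ### Trace computations -/

lemma trace_exp_slt {m : ℕ} (hm : 0 < m) {N : Matrix (Fin m) (Fin m) ℂ} (hN : SLT N) :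
    (exp N).trace = (m : ℂ) := by
  rw [exp_eq_sum_of_pow_eq_zero hN.pow_card, Matrix.trace_sum]
  rw [Finset.sum_eq_single_of_mem 0 (Finset.mem_range.mpr hm)]
  · simp [Matrix.trace_one]
  · intro k _ hk
    obtain ⟨k', rfl⟩ : ∃ k', k = k' + 1 := ⟨k - 1, by omega⟩
    rw [Matrix.trace_smul]
    have : (N ^ (k' + 1)).trace = 0 := by
      rw [Matrix.trace]
      refine Finset.sum_eq_zero fun i _ => ?_
      simpa [Matrix.diag] using hN.pow_apply k' i i (by omega)
    rw [this, smul_zero]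

lemma exp_scalar_add {m : ℕ} (l : ℂ) (N : Matrix (Fin m) (Fin m) ℂ) :
    exp (l • (1 : Matrix (Fin m) (Fin m) ℂ) + N) = Complex.exp l • exp N := by
  rw [Matrix.exp_add_of_commute (l • 1) N ((Commute.one_left N).smul_left l)]
  have h1 : exp (l • (1 : Matrix (Fin m) (Fin m) ℂ)) = Complex.exp l • 1 := by
    rw [Matrix.smul_one_eq_diagonal, Matrix.exp_diagonal, Matrix.smul_one_eq_diagonal]
    have hpi : (exp fun _ : Fin m => l) = fun _ : Fin m => Complex.exp l := by
      funext i
      rw [Pi.coe_exp, Complex.exp_eq_exp_ℂ]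
    rw [hpi]
  rw [h1, smul_mul_assoc, one_mul]

/-! ### The key complex-matrix statement -/

lemma complex_core {m : ℕ} (hm : 0 < m) (A B : Matrix (Fin m) (Fin m) ℂ)
    (hAt : ∀ i j : Fin m, i < j → A i j = 0) (hAd : ∀ i j : Fin m, A i i = A j j)
    (hBt : ∀ i j : Fin m, i < j → B i j = 0) (hBd : ∀ i j : Fin m, B i i = B j j)
    (hc : A * B = B * A) (he : exp A = exp B) :
    ∃ n : ℤ, A = B + (((n : ℂ) * (2 * (Real.pi : ℂ) * Complex.I)) •
      (1 : Matrix (Fin m) (Fin m) ℂ)) := by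
  set i0 : Fin m := ⟨0, hm⟩ with hi0
  set l : ℂ := A i0 i0 with hl
  set u : ℂ := B i0 i0 with hu
  set NA : Matrix (Fin m) (Fin m) ℂ := A - l • 1 with hNAdef
  set NB : Matrix (Fin m) (Fin m) ℂ := B - u • 1 with hNBdef
  have hNA : SLT NA := by
    intro i j hij
    rcases eq_or_lt_of_le hij with rfl | hlt
    · simp [hNAdef, Matrix.sub_apply, Matrix.smul_apply, Matrix.one_apply, hAd i i0, hl]
    · simp [hNAdef, Matrix.sub_apply, Matrix.smul_apply, Matrix.one_apply,
        hAt i j hlt, Fin.ne_of_lt hlt]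
  have hNB : SLT NB := by
    intro i j hij
    rcases eq_or_lt_of_le hij with rfl | hlt
    · simp [hNBdef, Matrix.sub_apply, Matrix.smul_apply, Matrix.one_apply, hBd i i0, hu]
    · simp [hNBdef, Matrix.sub_apply, Matrix.smul_apply, Matrix.one_apply,
        hBt i j hlt, Fin.ne_of_lt hlt]
  have hA' : A = l • 1 + NA := by rw [hNAdef]; abel
  have hB' : B = u • 1 + NB := by rw [hNBdef]; abel
  have keyA : exp A = Complex.exp l • exp NA := by
    conv_lhs => rw [hA']
    exact exp_scalar_add l NA
  have keyB : exp B = Complex.exp u • exp NB := by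
    conv_lhs => rw [hB']
    exact exp_scalar_add u NB
  have htr : Complex.exp l * (m : ℂ) = Complex.exp u * (m : ℂ) := by
    have h := congrArg Matrix.trace he
    rw [keyA, keyB, Matrix.trace_smul, Matrix.trace_smul,
      trace_exp_slt hm hNA, trace_exp_slt hm hNB] at h
    simpa [smul_eq_mul] using h
  have hlu : Complex.exp l = Complex.exp u :=
    mul_right_cancel₀ (Nat.cast_ne_zero.mpr hm.ne') htr
  have hexpN : exp NA = exp NB := by
    have h : Complex.exp l • exp NA = Complex.exp l • exp NB := by
      rw [← keyA, he, keyB, hlu]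
    have := congrArg (fun Z => (Complex.exp l)⁻¹ • Z) h
    simpa [smul_smul, inv_mul_cancel₀ (Complex.exp_ne_zero l)] using this
  have hcommAB : Commute A B := hc
  have hcomm : Commute NA NB := by
    rw [hNAdef, hNBdef]
    have h1 : Commute A (u • (1 : Matrix (Fin m) (Fin m) ℂ)) :=
      (Commute.one_right A).smul_right u
    have h2 : Commute (l • (1 : Matrix (Fin m) (Fin m) ℂ)) B :=
      (Commute.one_left B).smul_left l
    have h3 : Commute (l • (1 : Matrix (Fin m) (Fin m) ℂ))
        (u • (1 : Matrix (Fin m) (Fin m) ℂ)) :=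
      ((Commute.one_left _).smul_left l).smul_right u
    exact (hcommAB.sub_right h1).sub_left (h2.sub_right h3)
  have hnilA : IsNilpotent NA := ⟨m, hNA.pow_card⟩
  have hnilB : IsNilpotent NB := ⟨m, hNB.pow_card⟩
  have hD : IsNilpotent (NA - NB) := hcomm.isNilpotent_sub hnilA hnilB
  have hexpD : exp (NA - NB) = 1 := by
    have h1 := Matrix.exp_add_of_commute NA (-NB) hcomm.neg_right
    have h2 := Matrix.exp_add_of_commute NB (-NB) (Commute.refl NB).neg_right
    rw [add_neg_cancel, exp_zero] at h2
    calc exp (NA - NB) = exp NA * exp (-NB) := by rw [sub_eq_add_neg]; exact h1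
      _ = exp NB * exp (-NB) := by rw [hexpN]
      _ = 1 := h2.symm
  have hNAB : NA = NB := sub_eq_zero.mp (eq_zero_of_exp_eq_one hD hexpD)
  obtain ⟨n, hn⟩ := Complex.exp_eq_exp_iff_exists_int.mp hlu
  refine ⟨n, ?_⟩
  calc A = l • 1 + NA := hA'
    _ = (u + (n : ℂ) * (2 * (Real.pi : ℂ) * Complex.I)) • 1 + NB := by rw [← hn, hNAB]
    _ = B + (((n : ℂ) * (2 * (Real.pi : ℂ) * Complex.I)) • 1) := by
        rw [add_smul, hB']; abel

end Prop36

theorem eq_add_int_smul_J_of_exp_eq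
    (m : ℕ) (A B : Matrix (Fin m × Fin 2) (Fin m × Fin 2) ℝ)
    (hA : MemB A) (hB : MemB B)
    (hc : A * B = B * A) (he : exp A = exp B) :
    ∃ k : ℤ, A = B + ((2 * (k : ℝ) * Real.pi) • Jmat m) := by
  rcases Nat.eq_zero_or_pos m with rfl | hm
  · refine ⟨0, ?_⟩
    ext p q
    exact absurd p.1.2 (Nat.not_lt_zero _)
  obtain ⟨hAS, hAt, hAd⟩ := hA
  obtain ⟨hBS, hBt, hBd⟩ := hB
  have hpA : Prop36.phi m (Prop36.psi A) = A := Prop36.phi_psi hAS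
  have hpB : Prop36.phi m (Prop36.psi B) = B := Prop36.phi_psi hBS
  have hA't : ∀ i j : Fin m, i < j → Prop36.psi A i j = 0 := by
    intro i j hij
    have h := hAt i j hij
    have h0 := congrFun (congrFun h 0) 0
    have h1 := congrFun (congrFun h 0) 1
    simp only [blk, Matrix.of_apply, Matrix.zero_apply] at h0 h1
    apply Complex.ext
    · simpa [Prop36.psi] using h0
    · simpa [Prop36.psi] using h1
  have hB't : ∀ i j : Fin m, i < j → Prop36.psi B i j = 0 := by
    intro i j hij
    have h := hBt i j hij
    have h0 := congrFun (congrFun h 0) 0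
    have h1 := congrFun (congrFun h 0) 1
    simp only [blk, Matrix.of_apply, Matrix.zero_apply] at h0 h1
    apply Complex.ext
    · simpa [Prop36.psi] using h0
    · simpa [Prop36.psi] using h1
  have hA'd : ∀ i j : Fin m, Prop36.psi A i i = Prop36.psi A j j := by
    intro i j
    have h := hAd i j
    have h0 := congrFun (congrFun h 0) 0
    have h1 := congrFun (congrFun h 0) 1
    simp only [blk, Matrix.of_apply] at h0 h1
    apply Complex.ext
    · simpa [Prop36.psi] using h0
    · simpa [Prop36.psi] using h1
  have hB'd : ∀ i j : Fin m, Prop36.psi B i i = Prop36.psi B j j := by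
    intro i j
    have h := hBd i j
    have h0 := congrFun (congrFun h 0) 0
    have h1 := congrFun (congrFun h 0) 1
    simp only [blk, Matrix.of_apply] at h0 h1
    apply Complex.ext
    · simpa [Prop36.psi] using h0
    · simpa [Prop36.psi] using h1
  have hc' : Prop36.psi A * Prop36.psi B = Prop36.psi B * Prop36.psi A :=
    Prop36.phi_injective m (by rw [map_mul, map_mul, hpA, hpB, hc])
  have he' : exp (Prop36.psi A) = exp (Prop36.psi B) := by
    have h1 : Prop36.phi m (exp (Prop36.psi A)) = Prop36.phi m (exp (Prop36.psi B)) := by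
      rw [Prop36.phi_exp, Prop36.phi_exp, hpA, hpB, he]
    have h2 := Prop36.phi_injective m h1
    exact h2
  obtain ⟨n, hn⟩ :=
    Prop36.complex_core hm (Prop36.psi A) (Prop36.psi B) hA't hA'd hB't hB'd hc' he'
  refine ⟨-n, ?_⟩
  have h3 := congrArg (Prop36.phi m) hn
  rw [map_add, hpA, hpB] at h3
  rw [h3]
  congr 1
  ext ⟨i, a⟩ ⟨j, b⟩
  simp only [Prop36.phi_apply, Matrix.smul_apply, Matrix.one_apply, Jmat,
    Matrix.of_apply, smul_eq_mul]
  by_cases hij : i = j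
  · subst hij
    fin_cases a <;> fin_cases b <;>
      simp [Prop36.c2m, Complex.mul_re, Complex.mul_im] <;> push_cast <;> ring
  · fin_cases a <;> fin_cases b <;>
      simp [Prop36.c2m, hij]
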